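/- arXiv:1612.08888 — 4 statements merged into one kernel-verified Lean document; each statement's English description precedes it below -/
import Mathlib

section
/- Relaxed sufficient condition (relax): Let Γ be a bimatrix game for which there exists x_0 ∈ X such that max_{j∈BR_II(x_0)} α(x_0,e_j) = min_{j} α(x_0,e_j) and min_{j} α(x_0,e_j) ≥ max_{j∈BR_II(x)} α(x,e_j) for all x ∈ X. Then v_A = α^L = α^H. -/
open Matrix

noncomputable section

/-- The set of mixed strategies: the standard simplex in `ℝ^m`. -/
def Simp (m : ℕ) : Set (Fin m → ℝ) := stdSimplex ℝ (Fin m)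

/-- Bilinear payoff `xᵀ A y`. -/
def pay {m n : ℕ} (A : Matrix (Fin m) (Fin n) ℝ) (x : Fin m → ℝ) (y : Fin n → ℝ) : ℝ :=
  x ⬝ᵥ A.mulVec y

/-- Payoff of a mixed strategy `x` against the pure strategy `j`: `α(x, e_j) = (xᵀA)_j`. -/
def purePay {m n : ℕ} (A : Matrix (Fin m) (Fin n) ℝ) (x : Fin m → ℝ) (j : Fin n) : ℝ :=
  Matrix.vecMul x A j

/-- Pure best replies of player II against `x`. -/
def BRII {m n : ℕ} (B : Matrix (Fin m) (Fin n) ℝ) (x : Fin m → ℝ) : Set (Fin n) :=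
  {j | ∀ k, purePay B x k ≤ purePay B x j}

/-- Best-reply region `X(j)` of column `j`. -/
def XReg {m n : ℕ} (B : Matrix (Fin m) (Fin n) ℝ) (j : Fin n) : Set (Fin m → ℝ) :=
  {x ∈ Simp m | j ∈ BRII B x}

/-- `D`: columns whose best-reply region has a fully mixed point. -/
def Dset {m n : ℕ} (B : Matrix (Fin m) (Fin n) ℝ) : Set (Fin n) :=
  {j | ∃ x ∈ XReg B j, ∀ i, 0 < x i}

/-- `E(j)`: columns of `B` payoff-equivalent to column `j`. -/
def Ecols {m n : ℕ} (B : Matrix (Fin m) (Fin n) ℝ) (j : Fin n) : Set (Fin n) :=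
  {k | ∀ i, B i k = B i j}

/-- `min_j α(x, e_j)`. -/
def minPure {m n : ℕ} (A : Matrix (Fin m) (Fin n) ℝ) (x : Fin m → ℝ) : ℝ :=
  sInf {w | ∃ j, w = purePay A x j}

/-- `max_j α(x, e_j)`. -/
def maxPure {m n : ℕ} (A : Matrix (Fin m) (Fin n) ℝ) (x : Fin m → ℝ) : ℝ :=
  sSup {w | ∃ j, w = purePay A x j}

/-- `max_{j ∈ BR_II(x)} α(x, e_j)`. -/
def maxBR {m n : ℕ} (A B : Matrix (Fin m) (Fin n) ℝ) (x : Fin m → ℝ) : ℝ :=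
  sSup {w | ∃ j ∈ BRII B x, w = purePay A x j}

/-- Matrix game value `v_A = max_{x ∈ X} min_j α(x, e_j)`. -/
def matVal {m n : ℕ} (A : Matrix (Fin m) (Fin n) ℝ) : ℝ :=
  sSup {v | ∃ x ∈ Simp m, v = minPure A x}

/-- `min_{k ∈ E(j)} α(x, e_k)`. -/
def minE {m n : ℕ} (A B : Matrix (Fin m) (Fin n) ℝ) (j : Fin n) (x : Fin m → ℝ) : ℝ :=
  sInf {w | ∃ k ∈ Ecols B j, w = purePay A x k}

/-- Commitment value `α^L = max_{j∈D} max_{x∈X(j)} min_{k∈E(j)} α(x,e_k)`. -/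
def alphaL {m n : ℕ} (A B : Matrix (Fin m) (Fin n) ℝ) : ℝ :=
  sSup {v | ∃ j ∈ Dset B, ∃ x ∈ XReg B j, v = minE A B j x}

/-- Highest leader payoff `α^H = max_{j : X(j)≠∅} max_{x∈X(j)} α(x,e_j)`. -/
def alphaH {m n : ℕ} (A B : Matrix (Fin m) (Fin n) ℝ) : ℝ :=
  sSup {v | ∃ j, ∃ x ∈ XReg B j, v = purePay A x j}

/-- Commitment optimal strategies of the leader (player I). -/
def XLset {m n : ℕ} (A B : Matrix (Fin m) (Fin n) ℝ) : Set (Fin m → ℝ) :=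
  {x | ∃ j ∈ Dset B, x ∈ XReg B j ∧ minE A B j x = alphaL A B}

/-- Non-degeneracy for player I: no mixed strategy of player I has more pure best
replies (among player II's pure strategies) than the size of its support. -/
def NondegFor {m n : ℕ} (B : Matrix (Fin m) (Fin n) ℝ) : Prop :=
  ∀ x ∈ Simp m, (BRII B x).ncard ≤ {i | x i ≠ 0}.ncard

/-- Nash equilibrium of the bimatrix game `(A,B)`. -/
def isNE {m n : ℕ} (A B : Matrix (Fin m) (Fin n) ℝ) (x : Fin m → ℝ) (y : Fin n → ℝ) : Prop :=
  x ∈ Simp m ∧ y ∈ Simp n ∧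
  (∀ x' ∈ Simp m, pay A x' y ≤ pay A x y) ∧
  (∀ y' ∈ Simp n, pay B x y' ≤ pay B x y)

/-- Strategies of player I appearing in some Nash equilibrium. -/
def NEX {m n : ℕ} (A B : Matrix (Fin m) (Fin n) ℝ) : Set (Fin m → ℝ) :=
  {x | ∃ y, isNE A B x y}

/-- Strategies of player II appearing in some Nash equilibrium. -/
def NEY {m n : ℕ} (A B : Matrix (Fin m) (Fin n) ℝ) : Set (Fin n → ℝ) :=
  {y | ∃ x, isNE A B x y}

/-- Weakly unilaterally competitive bimatrix game. -/
def WUC {m n : ℕ} (A B : Matrix (Fin m) (Fin n) ℝ) : Prop :=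
  (∀ x₁ ∈ Simp m, ∀ x₂ ∈ Simp m, ∀ y ∈ Simp n,
    (pay A x₁ y > pay A x₂ y → pay B x₁ y ≤ pay B x₂ y) ∧
    (pay A x₁ y = pay A x₂ y → pay B x₁ y = pay B x₂ y)) ∧
  (∀ y₁ ∈ Simp n, ∀ y₂ ∈ Simp n, ∀ x ∈ Simp m,
    (pay B x y₁ > pay B x y₂ → pay A x y₁ ≤ pay A x y₂) ∧
    (pay B x y₁ = pay B x y₂ → pay A x y₁ = pay A x y₂))

-- AUX START

lemma purePay_fin {m n : ℕ} (A : Matrix (Fin m) (Fin n) ℝ) (x : Fin m → ℝ) :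
    {w | ∃ j, w = purePay A x j}.Finite := by
  have : {w | ∃ j, w = purePay A x j} = Set.range (purePay A x) := by
    ext w; simp [eq_comm, Set.range]
  rw [this]; exact Set.finite_range _

lemma minPure_le {m n : ℕ} (A : Matrix (Fin m) (Fin n) ℝ) (x : Fin m → ℝ) (j : Fin n) :
    minPure A x ≤ purePay A x j :=
  csInf_le (purePay_fin A x).bddBelow ⟨j, rfl⟩

lemma BRII_nonempty {m n : ℕ} (hn : 0 < n) (B : Matrix (Fin m) (Fin n) ℝ) (x : Fin m → ℝ) :
    ∃ j, j ∈ BRII B x := by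
  obtain ⟨b, -, hb⟩ := Finset.univ.exists_max_image (purePay B x)
    (Finset.univ_nonempty_iff.2 ⟨⟨0, hn⟩⟩)
  exact ⟨b, fun k => hb k (Finset.mem_univ k)⟩

lemma maxBR_fin {m n : ℕ} (A B : Matrix (Fin m) (Fin n) ℝ) (x : Fin m → ℝ) :
    {w | ∃ j ∈ BRII B x, w = purePay A x j}.Finite :=
  (purePay_fin A x).subset (by rintro w ⟨j, -, rfl⟩; exact ⟨j, rfl⟩)

lemma le_maxBR {m n : ℕ} (A B : Matrix (Fin m) (Fin n) ℝ) (x : Fin m → ℝ) {j : Fin n}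
    (hj : j ∈ BRII B x) : purePay A x j ≤ maxBR A B x :=
  le_csSup (maxBR_fin A B x).bddAbove ⟨j, hj, rfl⟩

lemma purePay_comb {m n : ℕ} (B : Matrix (Fin m) (Fin n) ℝ) (x y : Fin m → ℝ) (a b : ℝ)
    (k : Fin n) :
    purePay B (fun i => a * x i + b * y i) k = a * purePay B x k + b * purePay B y k := by
  simp [purePay, Matrix.vecMul, dotProduct, add_mul, Finset.sum_add_distrib,
    Finset.mul_sum, mul_assoc]

lemma exists_Dset_BR {m n : ℕ} (hn : 0 < n) (B : Matrix (Fin m) (Fin n) ℝ)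
    (x₀ : Fin m → ℝ) (hx₀ : x₀ ∈ Simp m) :
    ∃ j, j ∈ Dset B ∧ j ∈ BRII B x₀ := by
  classical
  have hm : 0 < m := Nat.pos_of_ne_zero (by rintro rfl; simpa using hx₀.2)
  set xbar : Fin m → ℝ := fun _ => (m : ℝ)⁻¹ with hxbar
  have hmR : (0:ℝ) < m := by exact_mod_cast hm
  have hxbarS : xbar ∈ Simp m := by
    constructor
    · intro i; positivity
    · simp [hxbar, Finset.sum_const, Finset.card_univ]
      field_simp
  obtain ⟨k₀, hk₀⟩ := BRII_nonempty hn B x₀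
  set p := purePay B x₀ with hp
  set q := purePay B xbar with hq
  set T : Finset (Fin n) := Finset.univ.filter (fun k => k ∉ BRII B x₀) with hT
  by_cases hTe : T = ∅
  · -- BRII B x₀ = univ
    obtain ⟨j, hj⟩ := BRII_nonempty hn B xbar
    have hall : ∀ k, k ∈ BRII B x₀ := by
      intro k
      by_contra hk
      have : k ∈ T := by simp [hT, hk]
      simp [hTe] at this
    exact ⟨j, ⟨xbar, ⟨hxbarS, hj⟩, fun i => by positivity⟩, hall j⟩
  · have hTne : T.Nonempty := Finset.nonempty_of_ne_empty hTe
    set δ : ℝ := T.inf' hTne (fun k => p k₀ - p k) with hδ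
    have hδpos : 0 < δ := by
      rw [hδ, Finset.lt_inf'_iff]
      intro k hk
      have hkn : k ∉ BRII B x₀ := (Finset.mem_filter.1 hk).2
      have : ∃ k', p k < p k' := by
        by_contra h
        push_neg at h
        exact hkn (fun k' => h k')
      obtain ⟨k', hk'⟩ := this
      have := hk₀ k'
      linarith
    set C : ℝ := (Finset.univ.sup' (Finset.univ_nonempty_iff.2 ⟨⟨0, hn⟩⟩)
      (fun k => q k - q k₀)) ⊔ 1 with hC
    have hC1 : (1:ℝ) ≤ C := le_sup_right
    have hCb : ∀ k, q k - q k₀ ≤ C := fun k =>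
      le_trans (Finset.le_sup' (fun k => q k - q k₀) (Finset.mem_univ k)) le_sup_left
    set ε : ℝ := δ / (2 * (δ + C)) with hε
    have hden : 0 < δ + C := by linarith
    have hεpos : 0 < ε := by positivity
    have hε1 : ε < 1 := by
      rw [hε, div_lt_one (by linarith)]
      linarith
    have hkey : ε * C < (1 - ε) * δ := by
      have h1 : ε * (δ + C) = δ / 2 := by
        rw [hε]; field_simp
      nlinarith
    set xe : Fin m → ℝ := fun i => (1 - ε) * x₀ i + ε * xbar i with hxe
    have hxeS : xe ∈ Simp m := by
      constructor
      · intro i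
        have := hx₀.1 i
        have : (0:ℝ) ≤ (1 - ε) * x₀ i := by nlinarith
        have h2 : (0:ℝ) < ε * xbar i := by
          simp only [hxbar]; positivity
        simp only [hxe]; linarith
      · simp only [hxe, Finset.sum_add_distrib, ← Finset.mul_sum]
        rw [hx₀.2]
        simp [hxbar, Finset.sum_const, Finset.card_univ]
        field_simp
        ring
    have hxepos : ∀ i, 0 < xe i := by
      intro i
      have := hx₀.1 i
      have h1 : (0:ℝ) ≤ (1 - ε) * x₀ i := by nlinarith
      have h2 : (0:ℝ) < ε * xbar i := by simp only [hxbar]; positivity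
      simp only [hxe]; linarith
    have hpe : ∀ k, purePay B xe k = (1 - ε) * p k + ε * q k := fun k =>
      purePay_comb B x₀ xbar (1 - ε) ε k
    obtain ⟨j, hj⟩ := BRII_nonempty hn B xe
    refine ⟨j, ⟨xe, ⟨hxeS, hj⟩, hxepos⟩, ?_⟩
    by_contra hjn
    have hjT : j ∈ T := by simp [hT, hjn]
    have hgap : δ ≤ p k₀ - p j := Finset.inf'_le _ hjT
    have := hj k₀
    rw [hpe, hpe] at this
    have hqb := hCb j
    nlinarith

-- AUX END

/-- relaxed sufficient condition (relax): if there exists `x₀ ∈ X` with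
`max_{j∈BR_II(x₀)} α(x₀,e_j) = min_j α(x₀,e_j)` and
`min_j α(x₀,e_j) ≥ max_{j∈BR_II(x)} α(x,e_j)` for all `x ∈ X`, then `v_A = α^L = α^H`. -/
theorem stmt6 {m n : ℕ} (A B : Matrix (Fin m) (Fin n) ℝ)
    (x₀ : Fin m → ℝ) (hx₀ : x₀ ∈ Simp m)
    (heq : maxBR A B x₀ = minPure A x₀)
    (hge : ∀ x ∈ Simp m, maxBR A B x ≤ minPure A x₀) :
    matVal A = alphaL A B ∧ alphaL A B = alphaH A B := by
  rcases Nat.eq_zero_or_pos n with hn | hn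
  · subst hn
    have hmin : ∀ x : Fin m → ℝ, minPure A x = 0 := by
      intro x
      have h0 : {w | ∃ j : Fin 0, w = purePay A x j} = ∅ :=
        Set.eq_empty_iff_forall_notMem.2 (by rintro w ⟨j, -⟩; exact j.elim0)
      rw [minPure, h0, Real.sInf_empty]
    have h1 : matVal A = 0 := by
      have h0 : {v | ∃ x ∈ Simp m, v = minPure A x} = {0} := by
        ext v
        constructor
        · rintro ⟨x, -, rfl⟩; simp [hmin]
        · rintro h; exact ⟨x₀, hx₀, by simp_all [hmin]⟩
      rw [matVal, h0, csSup_singleton]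
    have h2 : alphaL A B = 0 := by
      have h0 : {v | ∃ j ∈ Dset B, ∃ x ∈ XReg B j, v = minE A B j x} = ∅ :=
        Set.eq_empty_iff_forall_notMem.2 (by rintro v ⟨j, -⟩; exact j.elim0)
      rw [alphaL, h0, Real.sSup_empty]
    have h3 : alphaH A B = 0 := by
      have h0 : {v | ∃ j, ∃ x ∈ XReg B j, v = purePay A x j} = ∅ :=
        Set.eq_empty_iff_forall_notMem.2 (by rintro v ⟨j, -⟩; exact j.elim0)
      rw [alphaH, h0, Real.sSup_empty]
    rw [h1, h2, h3]; exact ⟨rfl, rfl⟩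
  · set v := minPure A x₀ with hv
    -- core bound: any best reply payoff is ≤ v
    have hbound : ∀ x ∈ Simp m, ∀ j ∈ BRII B x, purePay A x j ≤ v := by
      intro x hx j hj
      exact le_trans (le_maxBR A B x hj) (hge x hx)
    have h1 : matVal A = v := by
      unfold matVal
      apply le_antisymm
      · apply csSup_le
        · exact ⟨v, x₀, hx₀, rfl⟩
        rintro w ⟨x, hx, rfl⟩
        obtain ⟨j, hj⟩ := BRII_nonempty hn B x
        exact le_trans (minPure_le A x j) (hbound x hx j hj)
      · apply le_csSup
        swap
        · exact ⟨x₀, hx₀, rfl⟩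
        refine ⟨v, ?_⟩
        rintro w ⟨x, hx, rfl⟩
        obtain ⟨j, hj⟩ := BRII_nonempty hn B x
        exact le_trans (minPure_le A x j) (hbound x hx j hj)
    -- maxBR attained at x₀
    obtain ⟨j₀, hj₀, hj₀v⟩ : ∃ j ∈ BRII B x₀, v = purePay A x₀ j := by
      have hne : {w | ∃ j ∈ BRII B x₀, w = purePay A x₀ j}.Nonempty := by
        obtain ⟨j, hj⟩ := BRII_nonempty hn B x₀
        exact ⟨purePay A x₀ j, j, hj, rfl⟩
      have := hne.csSup_mem (maxBR_fin A B x₀)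
      rw [show sSup {w | ∃ j ∈ BRII B x₀, w = purePay A x₀ j} = maxBR A B x₀ from rfl,
        heq] at this
      exact this
    have h3 : alphaH A B = v := by
      unfold alphaH
      apply le_antisymm
      · apply csSup_le
        · exact ⟨v, j₀, x₀, ⟨hx₀, hj₀⟩, hj₀v⟩
        rintro w ⟨j, x, ⟨hx, hj⟩, rfl⟩
        exact hbound x hx j hj
      · apply le_csSup
        swap
        · exact ⟨j₀, x₀, ⟨hx₀, hj₀⟩, hj₀v⟩
        refine ⟨v, ?_⟩
        rintro w ⟨j, x, ⟨hx, hj⟩, rfl⟩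
        exact hbound x hx j hj
    have h2 : alphaL A B = v := by
      obtain ⟨j, hjD, hjBR⟩ := exists_Dset_BR hn B x₀ hx₀
      have hminEfin : ∀ (j' : Fin n) (x : Fin m → ℝ),
          {w | ∃ k ∈ Ecols B j', w = purePay A x k}.Finite := fun j' x =>
        (purePay_fin A x).subset (by rintro w ⟨k, -, rfl⟩; exact ⟨k, rfl⟩)
      have hminE_le : ∀ (j' : Fin n) (x : Fin m → ℝ), minE A B j' x ≤ purePay A x j' :=
        fun j' x => csInf_le (hminEfin j' x).bddBelow ⟨j', fun i => rfl, rfl⟩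
      have hvle : v ≤ minE A B j x₀ := by
        unfold minE
        apply le_csInf
        · exact ⟨purePay A x₀ j, j, fun i => rfl, rfl⟩
        rintro w ⟨k, -, rfl⟩
        exact minPure_le A x₀ k
      unfold alphaL
      apply le_antisymm
      · apply csSup_le
        · exact ⟨minE A B j x₀, j, hjD, x₀, ⟨hx₀, hjBR⟩, rfl⟩
        rintro w ⟨j', hj'D, x, ⟨hx, hj'⟩, rfl⟩
        exact le_trans (hminE_le j' x) (hbound x hx j' hj')
      · refine le_trans hvle ?_
        apply le_csSup
        swap
        · exact ⟨j, hjD, x₀, ⟨hx₀, hjBR⟩, rfl⟩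
        refine ⟨v, ?_⟩
        rintro w ⟨j', hj'D, x, ⟨hx, hj'⟩, rfl⟩
        exact le_trans (hminE_le j' x) (hbound x hx j' hj')
    rw [h1, h2, h3]; exact ⟨rfl, rfl⟩
end
end

section
/- If a bimatrix game Γ is weakly unilaterally competitive, then for every x ∈ X, max_{j∈BR_II(x)} α(x,e_j) = min_{j} α(x,e_j) (i.e. the sufficient condition (suff) holds for player I; by symmetry the analogous condition holds for player II). -/
open Matrix

noncomputable section

lemma pure_mem_simp {n : ℕ} (j : Fin n) : (Pi.single j 1 : Fin n → ℝ) ∈ Simp n := by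
  constructor
  · intro i
    rw [Pi.single_apply]
    split <;> norm_num
  · simp [Finset.sum_pi_single']

lemma pay_single {m n : ℕ} (A : Matrix (Fin m) (Fin n) ℝ) (x : Fin m → ℝ) (j : Fin n) :
    pay A x (Pi.single j 1) = purePay A x j := by
  simp only [pay, purePay, Matrix.dotProduct_mulVec, dotProduct_single, mul_one]

/-- a weakly unilaterally competitive game satisfies the sufficient
condition (suff) for player I: for every `x ∈ X`,
`max_{j∈BR_II(x)} α(x,e_j) = min_j α(x,e_j)`. -/
theorem stmt7 {m n : ℕ} (A B : Matrix (Fin m) (Fin n) ℝ) (hwuc : WUC A B) :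
    ∀ x ∈ Simp m, maxBR A B x = minPure A x := by
  intro x hx
  rcases Nat.eq_zero_or_pos n with hn | hn
  · subst hn
    have h1 : {w | ∃ j ∈ BRII B x, w = purePay A x j} = (∅ : Set ℝ) := by
      ext w; simp [BRII]
    have h2 : {w | ∃ j, w = purePay A x j} = (∅ : Set ℝ) := by
      ext w
      simp only [Set.mem_setOf_eq, Set.mem_empty_iff_false, iff_false, not_exists]
      intro j; exact absurd j.2 (by omega)
    rw [maxBR, minPure, h1, h2, Real.sSup_empty, Real.sInf_empty]
  · -- key: every best reply attains the minimum
    have key : ∀ j ∈ BRII B x, ∀ k, purePay A x j ≤ purePay A x k := by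
      intro j hj k
      have hβ : purePay B x k ≤ purePay B x j := hj k
      have := hwuc.2 (Pi.single j 1) (pure_mem_simp j) (Pi.single k 1) (pure_mem_simp k) x hx
      rw [pay_single, pay_single, pay_single, pay_single] at this
      rcases lt_or_eq_of_le hβ with h | h
      · exact this.1 h
      · exact le_of_eq (this.2 h.symm)
    have hrange : {w | ∃ j, w = purePay A x j} = Set.range (purePay A x) := by
      ext w; simp [eq_comm, Set.range]
    have hbdd : BddBelow {w | ∃ j, w = purePay A x j} := by
      rw [hrange]; exact (Set.finite_range _).bddBelow
    have hne : {w | ∃ j, w = purePay A x j}.Nonempty :=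
      ⟨purePay A x ⟨0, hn⟩, ⟨0, hn⟩, rfl⟩
    have hmin : ∀ j ∈ BRII B x, purePay A x j = minPure A x := by
      intro j hj
      refine le_antisymm ?_ (csInf_le hbdd ⟨j, rfl⟩)
      refine le_csInf hne ?_
      rintro w ⟨k, rfl⟩
      exact key j hj k
    -- BRII nonempty
    obtain ⟨j₀, -, hj₀⟩ := Finset.exists_max_image Finset.univ (purePay B x)
      ⟨⟨0, hn⟩, Finset.mem_univ _⟩
    have hj₀' : j₀ ∈ BRII B x := fun k => hj₀ k (Finset.mem_univ _)
    have hset : {w | ∃ j ∈ BRII B x, w = purePay A x j} = {minPure A x} := by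
      ext w
      simp only [Set.mem_setOf_eq, Set.mem_singleton_iff]
      constructor
      · rintro ⟨j, hj, rfl⟩; exact hmin j hj
      · rintro rfl; exact ⟨j₀, hj₀', (hmin j₀ hj₀').symm⟩
    rw [maxBR, hset, csSup_singleton]
end
end

section
/- Condition (conv): Let Γ be a bimatrix game such that for every x ∈ X, max_{j∈BR_II(x)} α(x,e_j) = max_{j} α(x,e_j). Then α^H = max_{i,j} A_{ij}, the largest entry of player I's payoff matrix. -/
open Matrix

noncomputable section

lemma purePay_eq_sum {m n : ℕ} (A : Matrix (Fin m) (Fin n) ℝ) (x : Fin m → ℝ) (j : Fin n) :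
    purePay A x j = ∑ i, x i * A i j := by
  simp [purePay, Matrix.vecMul, dotProduct]

lemma single_mem_simp {m : ℕ} (i : Fin m) : (Pi.single i 1 : Fin m → ℝ) ∈ Simp m := by
  constructor
  · intro k
    by_cases h : k = i <;> simp [Pi.single_apply, h]
  · simp

lemma purePay_single' {m n : ℕ} (A : Matrix (Fin m) (Fin n) ℝ) (i : Fin m) (j : Fin n) :
    purePay A (Pi.single i 1) j = A i j := by
  rw [purePay_eq_sum]
  rw [Finset.sum_eq_single i]
  · simp
  · intro b _ hb; simp [Pi.single_apply, hb]
  · simp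

lemma purePay_le {m n : ℕ} (A : Matrix (Fin m) (Fin n) ℝ) {x : Fin m → ℝ}
    (hx : x ∈ Simp m) {c : ℝ} (hc : ∀ i j, A i j ≤ c) (j : Fin n) :
    purePay A x j ≤ c := by
  rw [purePay_eq_sum]
  calc ∑ i, x i * A i j ≤ ∑ i, x i * c := by
        apply Finset.sum_le_sum
        intro i _
        exact mul_le_mul_of_nonneg_left (hc i j) (hx.1 i)
    _ = c := by rw [← Finset.sum_mul, hx.2, one_mul]

lemma brii_nonempty {m n : ℕ} (B : Matrix (Fin m) (Fin n) ℝ) (hn : 0 < n) (x : Fin m → ℝ) :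
    ∃ j, j ∈ BRII B x := by
  haveI : Nonempty (Fin n) := ⟨⟨0, hn⟩⟩
  obtain ⟨j, hj⟩ := Finite.exists_max (fun j => purePay B x j)
  exact ⟨j, hj⟩

/-- condition (conv): if for every `x ∈ X`,
`max_{j∈BR_II(x)} α(x,e_j) = max_j α(x,e_j)`, then `α^H` equals the largest entry
of player I's payoff matrix. -/
theorem stmt10 {m n : ℕ} (A B : Matrix (Fin m) (Fin n) ℝ)
    (hconv : ∀ x ∈ Simp m, maxBR A B x = maxPure A x) :
    alphaH A B = sSup {v | ∃ i j, v = A i j} := by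
  classical
  rcases Nat.eq_zero_or_pos m with hm | hm
  · have h1 : {v | ∃ j, ∃ x ∈ XReg B j, v = purePay A x j} = (∅ : Set ℝ) := by
      ext v
      simp only [Set.mem_setOf_eq, Set.mem_empty_iff_false, iff_false, not_exists]
      intro j x hx
      subst hm
      simpa using hx.1.1.2
    have h2 : {v | ∃ i j, v = A i j} = (∅ : Set ℝ) := by
      ext v
      simp only [Set.mem_setOf_eq, Set.mem_empty_iff_false, iff_false, not_exists]
      rintro i j -
      subst hm
      exact absurd i.2 (by omega)
    rw [alphaH, h1, h2]
  rcases Nat.eq_zero_or_pos n with hn | hn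
  · have h1 : {v | ∃ j, ∃ x ∈ XReg B j, v = purePay A x j} = (∅ : Set ℝ) := by
      ext v
      simp only [Set.mem_setOf_eq, Set.mem_empty_iff_false, iff_false, not_exists]
      rintro j
      subst hn
      exact absurd j.2 (by omega)
    have h2 : {v | ∃ i j, v = A i j} = (∅ : Set ℝ) := by
      ext v
      simp only [Set.mem_setOf_eq, Set.mem_empty_iff_false, iff_false, not_exists]
      rintro i j
      subst hn
      exact absurd j.2 (by omega)
    rw [alphaH, h1, h2]
  -- main case
  haveI : Nonempty (Fin m) := ⟨⟨0, hm⟩⟩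
  haveI : Nonempty (Fin n) := ⟨⟨0, hn⟩⟩
  set S₂ : Set ℝ := {v | ∃ i j, v = A i j} with hS₂
  have hS₂eq : S₂ = Set.range (fun p : Fin m × Fin n => A p.1 p.2) := by
    ext v
    constructor
    · rintro ⟨i, j, rfl⟩; exact ⟨(i, j), rfl⟩
    · rintro ⟨⟨i, j⟩, rfl⟩; exact ⟨i, j, rfl⟩
  have hS₂fin : S₂.Finite := by rw [hS₂eq]; exact Set.finite_range _
  have hS₂ne : S₂.Nonempty := by
    rw [hS₂eq]; exact Set.range_nonempty _
  set M : ℝ := sSup S₂ with hM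
  obtain ⟨i₀, j₀, hij⟩ : M ∈ S₂ := hS₂ne.csSup_mem hS₂fin
  have hMbd : ∀ i j, A i j ≤ M := fun i j =>
    le_csSup hS₂fin.bddAbove ⟨i, j, rfl⟩
  -- key: the pure strategy e_{i₀}
  set x₀ : Fin m → ℝ := Pi.single i₀ 1 with hx₀
  have hx₀S : x₀ ∈ Simp m := single_mem_simp i₀
  have hmaxPure : maxPure A x₀ = M := by
    apply le_antisymm
    · refine csSup_le ⟨purePay A x₀ j₀, j₀, rfl⟩ ?_
      rintro w ⟨j, rfl⟩
      exact purePay_le A hx₀S hMbd j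
    · have : M = purePay A x₀ j₀ := by rw [purePay_single', hij]
      rw [this]
      apply le_csSup
      · have hfin : {w | ∃ j, w = purePay A x₀ j}.Finite := by
          have : {w | ∃ j, w = purePay A x₀ j} = Set.range (purePay A x₀) := by
            ext w; simp [eq_comm, Set.range]
          rw [this]; exact Set.finite_range _
        exact hfin.bddAbove
      · exact ⟨j₀, rfl⟩
  have hmaxBR : maxBR A B x₀ = M := by rw [hconv x₀ hx₀S, hmaxPure]
  -- the maxBR set is finite nonempty, so sSup attained
  have hBRset : {w | ∃ j ∈ BRII B x₀, w = purePay A x₀ j}.Finite := by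
    have : {w | ∃ j ∈ BRII B x₀, w = purePay A x₀ j} = purePay A x₀ '' (BRII B x₀) := by
      ext w
      simp [Set.mem_image, eq_comm]
    rw [this]
    exact (Set.toFinite _).image _
  have hBRne : {w | ∃ j ∈ BRII B x₀, w = purePay A x₀ j}.Nonempty := by
    obtain ⟨j, hj⟩ := brii_nonempty B hn x₀
    exact ⟨purePay A x₀ j, j, hj, rfl⟩
  have hmem : M ∈ {w | ∃ j ∈ BRII B x₀, w = purePay A x₀ j} := by
    rw [← hmaxBR]
    exact hBRne.csSup_mem hBRset
  obtain ⟨j₁, hj₁, hj₁eq⟩ := hmem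
  -- so M ∈ the alphaH set
  set S₁ : Set ℝ := {v | ∃ j, ∃ x ∈ XReg B j, v = purePay A x j} with hS₁
  have hMS₁ : M ∈ S₁ := ⟨j₁, x₀, ⟨hx₀S, hj₁⟩, hj₁eq⟩
  have hS₁bd : ∀ v ∈ S₁, v ≤ M := by
    rintro v ⟨j, x, ⟨hxS, -⟩, rfl⟩
    exact purePay_le A hxS hMbd j
  apply le_antisymm
  · exact csSup_le ⟨M, hMS₁⟩ hS₁bd
  · exact le_csSup ⟨M, hS₁bd⟩ hMS₁
end
end

section
/- Alternative sufficient condition for α^L = α^H: Let Γ be a bimatrix game for which there exists x_0 ∈ X such that α^H is attained at x_0 (i.e. there is j_0 ∈ BR_II(x_0) with α(x_0,e_{j_0}) = α^H) and α(x_0,e_j) is constant over j ∈ BR_II(x_0). Then α^L = α^H. -/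
open Matrix

noncomputable section

lemma abs_entry_le {m n : ℕ} (A : Matrix (Fin m) (Fin n) ℝ) (i : Fin m) (j : Fin n) :
    |A i j| ≤ ∑ i', ∑ j', |A i' j'| := by
  calc |A i j| ≤ ∑ j', |A i j'| :=
        Finset.single_le_sum (f := fun j' => |A i j'|) (fun _ _ => abs_nonneg _) (Finset.mem_univ j)
  _ ≤ ∑ i', ∑ j', |A i' j'| :=
        Finset.single_le_sum (f := fun i' => ∑ j', |A i' j'|) (fun _ _ => Finset.sum_nonneg fun _ _ => abs_nonneg _) (Finset.mem_univ i)

lemma purePay_abs_le {m n : ℕ} (A : Matrix (Fin m) (Fin n) ℝ) {x : Fin m → ℝ}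
    (hx : x ∈ Simp m) (j : Fin n) : |purePay A x j| ≤ ∑ i', ∑ j', |A i' j'| := by
  obtain ⟨hpos, hsum⟩ := hx
  rw [purePay_eq_sum]
  calc |∑ i, x i * A i j| ≤ ∑ i, |x i * A i j| := Finset.abs_sum_le_sum_abs _ _
  _ ≤ ∑ i, x i * (∑ i', ∑ j', |A i' j'|) := by
      apply Finset.sum_le_sum; intro i _
      rw [abs_mul, abs_of_nonneg (hpos i)]
      exact mul_le_mul_of_nonneg_left (abs_entry_le A i j) (hpos i)
  _ = _ := by rw [← Finset.sum_mul, hsum, one_mul]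

lemma purePay_combo {m n : ℕ} (A : Matrix (Fin m) (Fin n) ℝ) (x y : Fin m → ℝ) (a b : ℝ) (j : Fin n) :
    purePay A (fun i => a * x i + b * y i) j = a * purePay A x j + b * purePay A y j := by
  simp only [purePay_eq_sum, Finset.mul_sum, ← Finset.sum_add_distrib]
  exact Finset.sum_congr rfl fun i _ => by ring

lemma purePay_col_eq {m n : ℕ} (B : Matrix (Fin m) (Fin n) ℝ) (x : Fin m → ℝ) {k j : Fin n}
    (h : ∀ i, B i k = B i j) : purePay B x k = purePay B x j := by
  simp only [purePay_eq_sum]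
  exact Finset.sum_congr rfl fun i _ => by rw [h i]

/-- alternative sufficient condition: if `α^H` is attained at some
`x₀ ∈ X` (i.e. `α(x₀,e_{j₀}) = α^H` for some `j₀ ∈ BR_II(x₀)`) and `α(x₀,e_j)` is
constant over `j ∈ BR_II(x₀)`, then `α^L = α^H`. -/
theorem stmt11 {m n : ℕ} (A B : Matrix (Fin m) (Fin n) ℝ)
    (x₀ : Fin m → ℝ) (hx₀ : x₀ ∈ Simp m)
    (hatt : ∃ j₀ ∈ BRII B x₀, purePay A x₀ j₀ = alphaH A B)
    (hconst : ∀ j ∈ BRII B x₀, ∀ j' ∈ BRII B x₀, purePay A x₀ j = purePay A x₀ j') :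
    alphaL A B = alphaH A B := by
  classical
  obtain ⟨j₀, hj₀, hval⟩ := hatt
  set M : ℝ := ∑ i', ∑ j', |A i' j'| with hMdef
  set N : ℝ := ∑ i', ∑ j', |B i' j'| with hNdef
  have hM0 : 0 ≤ M := Finset.sum_nonneg fun _ _ => Finset.sum_nonneg fun _ _ => abs_nonneg _
  have hN0 : 0 ≤ N := Finset.sum_nonneg fun _ _ => Finset.sum_nonneg fun _ _ => abs_nonneg _
  -- m positive
  have hm : 0 < m := by
    rcases Nat.eq_zero_or_pos m with h | h
    · exfalso; have := hx₀.2; subst h; simp at this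
    · exact h
  -- uniform strategy
  set u : Fin m → ℝ := fun _ => (m : ℝ)⁻¹ with hudef
  have hmR : (0:ℝ) < (m:ℝ) := by exact_mod_cast hm
  have hu : u ∈ Simp m := by
    constructor
    · intro i; positivity
    · simp [hudef, Finset.sum_const, Finset.card_univ, mul_inv_cancel₀ (ne_of_gt hmR)]
  -- perturbed strategies
  set xe : ℝ → (Fin m → ℝ) := fun ε i => (1 - ε) * x₀ i + ε * u i with hxedef
  have hxe_simp : ∀ ε : ℝ, 0 ≤ ε → ε ≤ 1 → xe ε ∈ Simp m := by
    intro ε h0 h1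
    constructor
    · intro i
      have := hx₀.1 i; have := hu.1 i
      have h1' : (0:ℝ) ≤ 1 - ε := by linarith
      positivity
    · have h1 := hx₀.2; have h2 := hu.2
      calc ∑ i, ((1 - ε) * x₀ i + ε * u i)
          = (1 - ε) * ∑ i, x₀ i + ε * ∑ i, u i := by
            rw [Finset.sum_add_distrib, Finset.mul_sum, Finset.mul_sum]
      _ = 1 := by rw [h1, h2]; ring
  have hxe_pos : ∀ ε : ℝ, 0 < ε → ε ≤ 1 → ∀ i, 0 < xe ε i := by
    intro ε h0 h1 i
    have hx1 := hx₀.1 i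
    have hu1 : 0 < u i := by simp [hudef]; positivity
    have h1' : (0:ℝ) ≤ 1 - ε := by linarith
    have : 0 < ε * u i := mul_pos h0 hu1
    have : 0 ≤ (1 - ε) * x₀ i := mul_nonneg h1' hx1
    simp only [hxedef]; linarith
  -- for sub-claim: BRII(xe ε) ⊆ BRII(x₀) for small ε
  have hsub : ∃ ε₁ : ℝ, 0 < ε₁ ∧ ε₁ ≤ 1 ∧
      ∀ ε : ℝ, 0 < ε → ε ≤ ε₁ → ∀ k, k ∈ BRII B (xe ε) → k ∈ BRII B x₀ := by
    by_cases hall : ∀ k, k ∈ BRII B x₀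
    · exact ⟨1, one_pos, le_refl 1, fun ε _ _ k _ => hall k⟩
    · push_neg at hall
      set F : Finset (Fin n) := Finset.univ.filter (fun k => k ∉ BRII B x₀) with hFdef
      have hF : F.Nonempty := by
        obtain ⟨k, hk⟩ := hall
        exact ⟨k, by simp [hFdef, hk]⟩
      set g : ℝ := F.inf' hF (fun k => purePay B x₀ j₀ - purePay B x₀ k) with hgdef
      have hg : 0 < g := by
        rw [hgdef]
        apply (Finset.lt_inf'_iff hF).mpr
        intro k hk
        have hk' : k ∉ BRII B x₀ := by simpa [hFdef] using hk
        simp only [BRII, Set.mem_setOf_eq, not_forall, not_le] at hk'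
        obtain ⟨k', hk'⟩ := hk'
        have := hj₀ k'
        linarith
      refine ⟨g / (g + 2*N + 1), by positivity, ?_, ?_⟩
      · rw [div_le_one (by linarith)]; linarith
      · intro ε h0 h1 k hk
        by_contra hkn
        have hkF : k ∈ F := by simp [hFdef, hkn]
        have hgk : g ≤ purePay B x₀ j₀ - purePay B x₀ k :=
          Finset.inf'_le _ hkF
        have h1' : ε < 1 := lt_of_le_of_lt h1 (by rw [div_lt_one (by linarith)]; linarith)
        have hineq := hk j₀
        rw [show xe ε = fun i => (1-ε) * x₀ i + ε * u i from rfl] at hineq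
        rw [purePay_combo, purePay_combo] at hineq
        have hb1 : |purePay B u k| ≤ N := purePay_abs_le B hu k
        have hb2 : |purePay B u j₀| ≤ N := purePay_abs_le B hu j₀
        rw [abs_le] at hb1 hb2
        -- (1-ε)(p j₀ - p k) ≤ ε (pu k - pu j₀) ≤ 2Nε
        have key : (1-ε) * g ≤ ε * (2*N) := by nlinarith [hb1.1, hb1.2, hb2.1, hb2.2]
        have : g ≤ ε * (g + 2*N) := by nlinarith
        have hden : (0:ℝ) < g + 2*N + 1 := by linarith
        have : ε * (g + 2*N) ≤ (g / (g + 2*N + 1)) * (g + 2*N) := by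
          apply mul_le_mul_of_nonneg_right h1 (by linarith)
        have hlt : (g / (g + 2*N + 1)) * (g + 2*N) < g := by
          rw [div_mul_eq_mul_div, div_lt_iff₀ hden]; nlinarith
        linarith
  obtain ⟨ε₁, hε₁0, hε₁1, hε₁⟩ := hsub
  -- alphaH value and bound
  have hαM : |alphaH A B| ≤ M := hval ▸ purePay_abs_le A hx₀ j₀
  -- main claim : for each small ε there is an element of the alphaL-set near alphaH
  have claim : ∀ ε : ℝ, 0 < ε → ε ≤ ε₁ →
      ∃ v ∈ {v | ∃ j ∈ Dset B, ∃ x ∈ XReg B j, v = minE A B j x},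
        alphaH A B - 2*M*ε ≤ v := by
    intro ε h0 h1
    have hε1 : ε ≤ 1 := le_trans h1 hε₁1
    have hxeS : xe ε ∈ Simp m := hxe_simp ε (le_of_lt h0) hε1
    have : Nonempty (Fin n) := ⟨j₀⟩
    obtain ⟨j, hj⟩ := Finite.exists_max (fun k => purePay B (xe ε) k)
    have hjBR : j ∈ BRII B (xe ε) := hj
    have hjX : xe ε ∈ XReg B j := ⟨hxeS, hjBR⟩
    have hjD : j ∈ Dset B := ⟨xe ε, hjX, hxe_pos ε h0 hε1⟩
    refine ⟨minE A B j (xe ε), ⟨j, hjD, xe ε, hjX, rfl⟩, ?_⟩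
    have hrw : minE A B j (xe ε) = sInf {w | ∃ k ∈ Ecols B j, w = purePay A (xe ε) k} := rfl
    rw [hrw]
    apply le_csInf
    · exact ⟨purePay A (xe ε) j, j, fun i => rfl, rfl⟩
    rintro w ⟨k, hkE, rfl⟩
    have hkBR : k ∈ BRII B (xe ε) := by
      intro k'
      rw [purePay_col_eq B (xe ε) hkE]
      exact hj k'
    have hkBR0 : k ∈ BRII B x₀ := hε₁ ε h0 h1 k hkBR
    have hk0 : purePay A x₀ k = alphaH A B := by
      rw [← hval]; exact hconst k hkBR0 j₀ hj₀
    have hcombo : purePay A (xe ε) k = (1-ε) * purePay A x₀ k + ε * purePay A u k := by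
      rw [show xe ε = fun i => (1-ε) * x₀ i + ε * u i from rfl, purePay_combo]
    rw [hcombo, hk0]
    have hb : |purePay A u k| ≤ M := purePay_abs_le A hu k
    rw [abs_le] at hb hαM
    nlinarith [hb.1, hαM.2]
  -- boundedness of the alphaL index set
  have hSL_bdd : BddAbove {v | ∃ j ∈ Dset B, ∃ x ∈ XReg B j, v = minE A B j x} := by
    refine ⟨M, ?_⟩
    rintro v ⟨j, hjD, x, hxX, rfl⟩
    have hTb : purePay A x j ∈ {w | ∃ k ∈ Ecols B j, w = purePay A x k} :=
      ⟨j, fun i => rfl, rfl⟩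
    have hbdd : BddBelow {w | ∃ k ∈ Ecols B j, w = purePay A x k} := by
      refine ⟨-M, ?_⟩
      rintro w ⟨k, hk, rfl⟩
      have := purePay_abs_le A hxX.1 k
      rw [abs_le] at this; exact this.1
    calc minE A B j x ≤ purePay A x j := csInf_le hbdd hTb
    _ ≤ M := le_trans (le_abs_self _) (purePay_abs_le A hxX.1 j)
  obtain ⟨v₀, hv₀mem, hv₀⟩ := claim ε₁ hε₁0 (le_refl _)
  have hSL_ne : Set.Nonempty {v | ∃ j ∈ Dset B, ∃ x ∈ XReg B j, v = minE A B j x} :=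
    ⟨v₀, hv₀mem⟩
  -- alphaH set bounded above
  have hSH_bdd : BddAbove {v | ∃ j, ∃ x ∈ XReg B j, v = purePay A x j} := by
    refine ⟨M, ?_⟩
    rintro v ⟨j, x, hxX, rfl⟩
    exact le_trans (le_abs_self _) (purePay_abs_le A hxX.1 j)
  -- alphaL ≤ alphaH
  have hLH : alphaL A B ≤ alphaH A B := by
    apply csSup_le hSL_ne
    rintro v ⟨j, hjD, x, hxX, rfl⟩
    have hbdd : BddBelow {w | ∃ k ∈ Ecols B j, w = purePay A x k} := by
      refine ⟨-M, ?_⟩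
      rintro w ⟨k, hk, rfl⟩
      have := purePay_abs_le A hxX.1 k
      rw [abs_le] at this; exact this.1
    calc minE A B j x ≤ purePay A x j := csInf_le hbdd ⟨j, fun i => rfl, rfl⟩
    _ ≤ alphaH A B := le_csSup hSH_bdd ⟨j, x, hxX, rfl⟩
  -- alphaH ≤ alphaL
  have hHL : alphaH A B ≤ alphaL A B := by
    apply le_of_forall_pos_le_add
    intro δ hδ
    set ε : ℝ := min ε₁ (δ / (2*M + 1)) with hεdef
    have hε0 : 0 < ε := lt_min hε₁0 (by positivity)
    obtain ⟨v, hvmem, hv⟩ := claim ε hε0 (min_le_left _ _)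
    have h1 : v ≤ alphaL A B := le_csSup hSL_bdd hvmem
    have h2 : 2*M*ε ≤ δ := by
      have : ε ≤ δ / (2*M + 1) := min_le_right _ _
      have h3 : 2*M*ε ≤ 2*M*(δ / (2*M + 1)) :=
        mul_le_mul_of_nonneg_left this (by linarith)
      have h4 : 2*M*(δ / (2*M + 1)) ≤ δ := by
        rw [mul_div_assoc', div_le_iff₀ (by linarith)]; nlinarith
      linarith
    linarith
  linarith
end
end
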